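/- arXiv:2507.02491 — 2 statements merged into one kernel-verified Lean document; each statement's English description precedes it below -/
import Mathlib

section
/- For any LTLf formula φ over variables P, the set Q of states reachable from [φ]≡ under the translation tr (taking leaves of tr(q) repeatedly) is finite, with |Q| ≤ 2^(2^|sf(φ)|), where sf(φ) is the set of subformulas of φ. -/
inductive LTLf (P : Type) : Type where
  | tt : LTLf P
  | ff : LTLf P
  | atom (p : P) : LTLf P
  | not (φ : LTLf P) : LTLf P
  | and (φ ψ : LTLf P) : LTLf P
  | or (φ ψ : LTLf P) : LTLf P
  | wnext (φ : LTLf P) : LTLf P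
  | snext (φ : LTLf P) : LTLf P
  | untl (φ ψ : LTLf P) : LTLf P
  | release (φ ψ : LTLf P) : LTLf P
  | glob (φ : LTLf P) : LTLf P
  | fin (φ : LTLf P) : LTLf P
  deriving DecidableEq

/-- LTLf semantics over a finite word `σ` (a list of assignments), at position `i`. -/
def LTLf.Sat {P : Type} (σ : List (P → Bool)) : LTLf P → ℕ → Prop
  | .tt, _ => True
  | .ff, _ => False
  | .atom p, i => (σ.getD i (fun _ => false)) p = true
  | .not φ, i => ¬ LTLf.Sat σ φ i
  | .and φ ψ, i => LTLf.Sat σ φ i ∧ LTLf.Sat σ ψ i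
  | .or φ ψ, i => LTLf.Sat σ φ i ∨ LTLf.Sat σ ψ i
  | .wnext φ, i => i + 1 = σ.length ∨ LTLf.Sat σ φ (i + 1)
  | .snext φ, i => i + 1 < σ.length ∧ LTLf.Sat σ φ (i + 1)
  | .untl φ ψ, i => ∃ j, i ≤ j ∧ j < σ.length ∧ LTLf.Sat σ ψ j ∧
      ∀ k, i ≤ k → k < j → LTLf.Sat σ φ k
  | .release φ ψ, i => ∀ j, i ≤ j → j < σ.length →
      LTLf.Sat σ ψ j ∨ ∃ k, i ≤ k ∧ k < j ∧ LTLf.Sat σ φ k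
  | .glob φ, i => ∀ j, i ≤ j → j < σ.length → LTLf.Sat σ φ j
  | .fin φ, i => ∃ j, i ≤ j ∧ j < σ.length ∧ LTLf.Sat σ φ j

/-- Boolean evaluation of the propositional abstraction of an LTLf formula:
atoms and maximal temporal subformulas are treated as propositional variables,
interpreted by a valuation `v`. -/
def LTLf.BEval {P : Type} (v : LTLf P → Prop) : LTLf P → Prop
  | .tt => True
  | .ff => False
  | .not φ => ¬ LTLf.BEval v φ
  | .and φ ψ => LTLf.BEval v φ ∧ LTLf.BEval v ψ
  | .or φ ψ => LTLf.BEval v φ ∨ LTLf.BEval v ψ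
  | φ => v φ

/-- Propositional equivalence: the propositional abstractions are equivalent
Boolean formulas, i.e., agree under every valuation of the variables. -/
def LTLf.PropEquiv {P : Type} (α β : LTLf P) : Prop :=
  ∀ v : LTLf P → Prop, LTLf.BEval v α ↔ LTLf.BEval v β

/-- MTBDDs (as decision trees; sharing of isomorphic subgraphs corresponds to
equality of subtrees) over variables `Fin n` with terminal values in `S`. -/
inductive MTBDD (n : ℕ) (S : Type) : Type where
  | leaf (s : S) : MTBDD n S
  | node (p : Fin n) (lo hi : MTBDD n S) : MTBDD n S
  deriving DecidableEq

namespace MTBDD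

/-- The function `B^P → S` denoted by an MTBDD. -/
def eval {n : ℕ} {S : Type} : MTBDD n S → (Fin n → Bool) → S
  | .leaf s, _ => s
  | .node p lo hi, w => if w p then eval hi w else eval lo w

/-- All branches test variables in strictly increasing order, starting at least at `b`. -/
def OrderedFrom {n : ℕ} {S : Type} : ℕ → MTBDD n S → Prop
  | _, .leaf _ => True
  | b, .node p lo hi => b ≤ (p : ℕ) ∧ OrderedFrom ((p : ℕ) + 1) lo ∧ OrderedFrom ((p : ℕ) + 1) hi

/-- Ordered MTBDD. -/
def Ordered {n : ℕ} {S : Type} (m : MTBDD n S) : Prop := OrderedFrom 0 m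

/-- Reduced MTBDD: no internal node has identical low and high successors
(isomorphic subgraphs being shared, they are represented by equal subtrees). -/
def Reduced {n : ℕ} {S : Type} : MTBDD n S → Prop
  | .leaf _ => True
  | .node _ lo hi => lo ≠ hi ∧ Reduced lo ∧ Reduced hi

end MTBDD

namespace MTBDD

/-- Apply a function to every terminal of an MTBDD. -/
def mapLeaf {n : ℕ} {S T : Type} (f : S → T) : MTBDD n S → MTBDD n T
  | .leaf s => .leaf (f s)
  | .node p lo hi => .node p (mapLeaf f lo) (mapLeaf f hi)

/-- The recursive `apply` procedure combining two MTBDDs with a binary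
operation on terminals, recursing on the topmost variable. -/
def apply {n : ℕ} {S₁ S₂ S₃ : Type} (op : S₁ → S₂ → S₃) :
    MTBDD n S₁ → MTBDD n S₂ → MTBDD n S₃
  | .leaf a, .leaf b => .leaf (op a b)
  | .leaf a, .node q lo hi => .node q (apply op (.leaf a) lo) (apply op (.leaf a) hi)
  | .node p lo hi, .leaf b => .node p (apply op lo (.leaf b)) (apply op hi (.leaf b))
  | .node p lo hi, .node q lo' hi' =>
    if p < q then
      .node p (apply op lo (.node q lo' hi')) (apply op hi (.node q lo' hi'))
    else if q < p then
      .node q (apply op (.node p lo hi) lo') (apply op (.node p lo hi) hi')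
    else
      .node p (apply op lo lo') (apply op hi hi')
  termination_by m₁ m₂ => sizeOf m₁ + sizeOf m₂
  decreasing_by all_goals simp +arith +decide

/-- The list of terminal values appearing in an MTBDD. -/
def leavesList {n : ℕ} {S : Type} : MTBDD n S → List S
  | .leaf s => [s]
  | .node _ lo hi => leavesList lo ++ leavesList hi

end MTBDD

/-- Negation of an MTBDD with terminals in `LTLf × Bool`; the formula component
is taken up to propositional equivalence via the representative function `rep`. -/
def mnot {n : ℕ} (rep : LTLf (Fin n) → LTLf (Fin n)) :
    MTBDD n (LTLf (Fin n) × Bool) → MTBDD n (LTLf (Fin n) × Bool) :=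
  MTBDD.mapLeaf (fun a => (rep (.not a.1), !a.2))

/-- Conjunction of MTBDDs with terminals in `LTLf × Bool`, combining terminals
componentwise (formulas up to propositional equivalence via `rep`). -/
def mand {n : ℕ} (rep : LTLf (Fin n) → LTLf (Fin n)) :
    MTBDD n (LTLf (Fin n) × Bool) → MTBDD n (LTLf (Fin n) × Bool) →
      MTBDD n (LTLf (Fin n) × Bool) :=
  MTBDD.apply (fun a b => (rep (.and a.1 b.1), a.2 && b.2))

/-- Disjunction of MTBDDs with terminals in `LTLf × Bool`. -/
def mor {n : ℕ} (rep : LTLf (Fin n) → LTLf (Fin n)) :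
    MTBDD n (LTLf (Fin n) × Bool) → MTBDD n (LTLf (Fin n) × Bool) →
      MTBDD n (LTLf (Fin n) × Bool) :=
  MTBDD.apply (fun a b => (rep (.or a.1 b.1), a.2 || b.2))

/-- The translation `tr` from LTLf formulas to MTBDDs with terminals labeled by
pairs (formula, Boolean), formula components being taken up to propositional
equivalence through the representative function `rep`. -/
def tr {n : ℕ} (rep : LTLf (Fin n) → LTLf (Fin n)) :
    LTLf (Fin n) → MTBDD n (LTLf (Fin n) × Bool)
  | .tt => .leaf (rep .tt, true)
  | .ff => .leaf (rep .ff, false)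
  | .atom p => .node p (.leaf (rep .ff, false)) (.leaf (rep .tt, true))
  | .not α => mnot rep (tr rep α)
  | .and α β => mand rep (tr rep α) (tr rep β)
  | .or α β => mor rep (tr rep α) (tr rep β)
  | .wnext α => .leaf (rep α, true)
  | .snext α => .leaf (rep α, false)
  | .untl α β => mor rep (tr rep β) (mand rep (tr rep α) (.leaf (rep (.untl α β), false)))
  | .release α β => mand rep (tr rep β) (mor rep (tr rep α) (.leaf (rep (.release α β), true)))
  | .glob α => mand rep (tr rep α) (.leaf (rep (.glob α), true))
  | .fin α => mor rep (tr rep α) (.leaf (rep (.fin α), false))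

/-- The set of subformulas of an LTLf formula. -/
def LTLf.sf {P : Type} [DecidableEq P] : LTLf P → Finset (LTLf P)
  | .tt => {.tt}
  | .ff => {.ff}
  | .atom p => {.atom p}
  | .not φ => insert (.not φ) φ.sf
  | .and φ ψ => insert (.and φ ψ) (φ.sf ∪ ψ.sf)
  | .or φ ψ => insert (.or φ ψ) (φ.sf ∪ ψ.sf)
  | .wnext φ => insert (.wnext φ) φ.sf
  | .snext φ => insert (.snext φ) φ.sf
  | .untl φ ψ => insert (.untl φ ψ) (φ.sf ∪ ψ.sf)
  | .release φ ψ => insert (.release φ ψ) (φ.sf ∪ ψ.sf)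
  | .glob φ => insert (.glob φ) φ.sf
  | .fin φ => insert (.fin φ) φ.sf

/-- The states reachable from `[φ]≡` by repeatedly taking formulas labeling
the leaves of `tr`. -/
inductive Reach {n : ℕ} (rep : LTLf (Fin n) → LTLf (Fin n)) (φ : LTLf (Fin n)) :
    LTLf (Fin n) → Prop
  | init : Reach rep φ (rep φ)
  | step {q α : LTLf (Fin n)} {b : Bool} :
      Reach rep φ q → (α, b) ∈ (tr rep q).leavesList → Reach rep φ α


section AuxProofs

variable {n : ℕ}

/-! ### Basic facts about subformulas -/

lemma LTLf.sf_self {P : Type} [DecidableEq P] (γ : LTLf P) : γ ∈ γ.sf := by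
  cases γ <;> simp [LTLf.sf]

lemma LTLf.sf_closed {P : Type} [DecidableEq P] :
    ∀ {γ τ : LTLf P}, τ ∈ γ.sf → τ.sf ⊆ γ.sf := by
  intro γ
  induction γ with
  | tt => intro τ h; simp [LTLf.sf] at h; subst h; exact Finset.Subset.refl _
  | ff => intro τ h; simp [LTLf.sf] at h; subst h; exact Finset.Subset.refl _
  | atom p => intro τ h; simp [LTLf.sf] at h; subst h; exact Finset.Subset.refl _
  | not a ih =>
    intro τ h
    rcases Finset.mem_insert.mp h with h | h
    · subst h; exact Finset.Subset.refl _
    · exact (ih h).trans (Finset.subset_insert _ _)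
  | and a b iha ihb =>
    intro τ h
    rcases Finset.mem_insert.mp h with h | h
    · subst h; exact Finset.Subset.refl _
    · rcases Finset.mem_union.mp h with h | h
      · exact (iha h).trans ((Finset.subset_union_left).trans (Finset.subset_insert _ _))
      · exact (ihb h).trans ((Finset.subset_union_right).trans (Finset.subset_insert _ _))
  | or a b iha ihb =>
    intro τ h
    rcases Finset.mem_insert.mp h with h | h
    · subst h; exact Finset.Subset.refl _
    · rcases Finset.mem_union.mp h with h | h
      · exact (iha h).trans ((Finset.subset_union_left).trans (Finset.subset_insert _ _))
      · exact (ihb h).trans ((Finset.subset_union_right).trans (Finset.subset_insert _ _))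
  | wnext a ih =>
    intro τ h
    rcases Finset.mem_insert.mp h with h | h
    · subst h; exact Finset.Subset.refl _
    · exact (ih h).trans (Finset.subset_insert _ _)
  | snext a ih =>
    intro τ h
    rcases Finset.mem_insert.mp h with h | h
    · subst h; exact Finset.Subset.refl _
    · exact (ih h).trans (Finset.subset_insert _ _)
  | untl a b iha ihb =>
    intro τ h
    rcases Finset.mem_insert.mp h with h | h
    · subst h; exact Finset.Subset.refl _
    · rcases Finset.mem_union.mp h with h | h
      · exact (iha h).trans ((Finset.subset_union_left).trans (Finset.subset_insert _ _))
      · exact (ihb h).trans ((Finset.subset_union_right).trans (Finset.subset_insert _ _))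
  | release a b iha ihb =>
    intro τ h
    rcases Finset.mem_insert.mp h with h | h
    · subst h; exact Finset.Subset.refl _
    · rcases Finset.mem_union.mp h with h | h
      · exact (iha h).trans ((Finset.subset_union_left).trans (Finset.subset_insert _ _))
      · exact (ihb h).trans ((Finset.subset_union_right).trans (Finset.subset_insert _ _))
  | glob a ih =>
    intro τ h
    rcases Finset.mem_insert.mp h with h | h
    · subst h; exact Finset.Subset.refl _
    · exact (ih h).trans (Finset.subset_insert _ _)
  | fin a ih =>
    intro τ h
    rcases Finset.mem_insert.mp h with h | h
    · subst h; exact Finset.Subset.refl _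
    · exact (ih h).trans (Finset.subset_insert _ _)

/-- `BEval` only depends on the valuation on subformulas. -/
lemma LTLf.beval_congr {P : Type} [DecidableEq P] {u u' : LTLf P → Prop} :
    ∀ γ : LTLf P, (∀ τ ∈ γ.sf, (u τ ↔ u' τ)) → (LTLf.BEval u γ ↔ LTLf.BEval u' γ) := by
  intro γ
  induction γ with
  | tt => intro _; simp [LTLf.BEval]
  | ff => intro _; simp [LTLf.BEval]
  | atom p => intro h; simpa [LTLf.BEval] using h _ (LTLf.sf_self _)
  | not a ih =>
    intro h
    simp only [LTLf.BEval]
    exact not_congr (ih fun τ hτ => h τ (Finset.mem_insert_of_mem hτ))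
  | and a b iha ihb =>
    intro h
    simp only [LTLf.BEval]
    exact and_congr
      (iha fun τ hτ => h τ (Finset.mem_insert_of_mem (Finset.mem_union_left _ hτ)))
      (ihb fun τ hτ => h τ (Finset.mem_insert_of_mem (Finset.mem_union_right _ hτ)))
  | or a b iha ihb =>
    intro h
    simp only [LTLf.BEval]
    exact or_congr
      (iha fun τ hτ => h τ (Finset.mem_insert_of_mem (Finset.mem_union_left _ hτ)))
      (ihb fun τ hτ => h τ (Finset.mem_insert_of_mem (Finset.mem_union_right _ hτ)))
  | wnext a ih => intro h; simpa [LTLf.BEval] using h _ (LTLf.sf_self _)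
  | snext a ih => intro h; simpa [LTLf.BEval] using h _ (LTLf.sf_self _)
  | untl a b iha ihb => intro h; simpa [LTLf.BEval] using h _ (LTLf.sf_self _)
  | release a b iha ihb => intro h; simpa [LTLf.BEval] using h _ (LTLf.sf_self _)
  | glob a ih => intro h; simpa [LTLf.BEval] using h _ (LTLf.sf_self _)
  | fin a ih => intro h; simpa [LTLf.BEval] using h _ (LTLf.sf_self _)

/-! ### The derivative valuation -/

/-- Semantics of the leaf of `tr rep q` along branch `w`, seen as a function of a
valuation `u` of the next states. -/
def Vb (w : Fin n → Bool) (u : LTLf (Fin n) → Prop) : LTLf (Fin n) → Prop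
  | .tt => True
  | .ff => False
  | .atom p => w p = true
  | .not a => ¬ Vb w u a
  | .and a b => Vb w u a ∧ Vb w u b
  | .or a b => Vb w u a ∨ Vb w u b
  | .wnext a => LTLf.BEval u a
  | .snext a => LTLf.BEval u a
  | .untl a b => Vb w u b ∨ (Vb w u a ∧ u (.untl a b))
  | .release a b => Vb w u b ∧ (Vb w u a ∨ u (.release a b))
  | .glob a => Vb w u a ∧ u (.glob a)
  | .fin a => Vb w u a ∨ u (.fin a)

lemma beval_Vb (w : Fin n → Bool) (u : LTLf (Fin n) → Prop) :
    ∀ γ : LTLf (Fin n), LTLf.BEval (fun τ => Vb w u τ) γ ↔ Vb w u γ := by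
  intro γ
  induction γ with
  | tt => simp [LTLf.BEval, Vb]
  | ff => simp [LTLf.BEval, Vb]
  | atom p => simp [LTLf.BEval]
  | not a ih => simp [LTLf.BEval, Vb, ih]
  | and a b iha ihb => simp [LTLf.BEval, Vb, iha, ihb]
  | or a b iha ihb => simp [LTLf.BEval, Vb, iha, ihb]
  | wnext a ih => simp [LTLf.BEval]
  | snext a ih => simp [LTLf.BEval]
  | untl a b iha ihb => simp [LTLf.BEval]
  | release a b iha ihb => simp [LTLf.BEval]
  | glob a ih => simp [LTLf.BEval]
  | fin a ih => simp [LTLf.BEval]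

/-- If `u` and `u'` agree on the subformulas of `φ`, then `Vb w u` and `Vb w u'`
agree on every formula all of whose subformulas lie in `sf φ`. -/
lemma Vb_congr {w : Fin n → Bool} {u u' : LTLf (Fin n) → Prop} {φ : LTLf (Fin n)}
    (hag : ∀ τ ∈ φ.sf, (u τ ↔ u' τ)) :
    ∀ γ : LTLf (Fin n), γ.sf ⊆ φ.sf → (Vb w u γ ↔ Vb w u' γ) := by
  intro γ
  induction γ with
  | tt => intro _; simp [Vb]
  | ff => intro _; simp [Vb]
  | atom p => intro _; simp [Vb]
  | not a ih =>
    intro hs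
    simp only [Vb]
    exact not_congr (ih ((Finset.subset_insert _ _).trans hs))
  | and a b iha ihb =>
    intro hs
    simp only [Vb]
    exact and_congr
      (iha ((Finset.subset_union_left.trans (Finset.subset_insert _ _)).trans hs))
      (ihb ((Finset.subset_union_right.trans (Finset.subset_insert _ _)).trans hs))
  | or a b iha ihb =>
    intro hs
    simp only [Vb]
    exact or_congr
      (iha ((Finset.subset_union_left.trans (Finset.subset_insert _ _)).trans hs))
      (ihb ((Finset.subset_union_right.trans (Finset.subset_insert _ _)).trans hs))
  | wnext a ih =>
    intro hs
    simp only [Vb]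
    exact LTLf.beval_congr a fun τ hτ =>
      hag τ (hs (Finset.mem_insert_of_mem hτ))
  | snext a ih =>
    intro hs
    simp only [Vb]
    exact LTLf.beval_congr a fun τ hτ =>
      hag τ (hs (Finset.mem_insert_of_mem hτ))
  | untl a b iha ihb =>
    intro hs
    simp only [Vb]
    exact or_congr
      (ihb ((Finset.subset_union_right.trans (Finset.subset_insert _ _)).trans hs))
      (and_congr
        (iha ((Finset.subset_union_left.trans (Finset.subset_insert _ _)).trans hs))
        (hag _ (hs (LTLf.sf_self _))))
  | release a b iha ihb =>
    intro hs
    simp only [Vb]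
    exact and_congr
      (ihb ((Finset.subset_union_right.trans (Finset.subset_insert _ _)).trans hs))
      (or_congr
        (iha ((Finset.subset_union_left.trans (Finset.subset_insert _ _)).trans hs))
        (hag _ (hs (LTLf.sf_self _))))
  | glob a ih =>
    intro hs
    simp only [Vb]
    exact and_congr (ih ((Finset.subset_insert _ _).trans hs)) (hag _ (hs (LTLf.sf_self _)))
  | fin a ih =>
    intro hs
    simp only [Vb]
    exact or_congr (ih ((Finset.subset_insert _ _).trans hs)) (hag _ (hs (LTLf.sf_self _)))

/-! ### Facts about MTBDD operations -/

namespace MTBDD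

lemma eval_mapLeaf {S T : Type} (f : S → T) :
    ∀ (m : MTBDD n S) (w : Fin n → Bool), (m.mapLeaf f).eval w = f (m.eval w) := by
  intro m
  induction m with
  | leaf s => intro w; rfl
  | node p lo hi ihlo ihhi =>
    intro w
    by_cases h : w p <;> simp [mapLeaf, eval, h, ihlo, ihhi]

lemma eval_apply {S₁ S₂ S₃ : Type} (op : S₁ → S₂ → S₃) (m₁ : MTBDD n S₁) (m₂ : MTBDD n S₂)
    (w : Fin n → Bool) :
    (MTBDD.apply op m₁ m₂).eval w = op (m₁.eval w) (m₂.eval w) := by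
  induction m₁, m₂ using MTBDD.apply.induct with
  | case1 a b => simp [MTBDD.apply, eval]
  | case2 a q lo hi ih1 ih2 => by_cases h : w q <;> simp [MTBDD.apply, eval, h, ih1, ih2]
  | case3 p lo hi b ih1 ih2 => by_cases h : w p <;> simp [MTBDD.apply, eval, h, ih1, ih2]
  | case4 p lo hi q lo' hi' hpq ih1 ih2 =>
      by_cases h : w p <;> simp [MTBDD.apply, eval, hpq, h, ih1, ih2]
  | case5 p lo hi q lo' hi' hpq hqp ih1 ih2 =>
      by_cases h : w q <;> simp [MTBDD.apply, eval, hpq, hqp, h, ih1, ih2]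
  | case6 p lo hi q lo' hi' hpq hqp ih1 ih2 =>
      have : p = q := le_antisymm (not_lt.mp hqp) (not_lt.mp hpq)
      subst this
      by_cases h : w p <;> simp [MTBDD.apply, eval, hpq, hqp, h, ih1, ih2]

lemma orderedFrom_mapLeaf {S T : Type} (f : S → T) :
    ∀ (m : MTBDD n S) (b : ℕ), OrderedFrom b m → OrderedFrom b (m.mapLeaf f) := by
  intro m
  induction m with
  | leaf s => intro b _; trivial
  | node p lo hi ihlo ihhi =>
    intro b h
    obtain ⟨h1, h2, h3⟩ := h
    exact ⟨h1, ihlo _ h2, ihhi _ h3⟩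

lemma orderedFrom_apply {S₁ S₂ S₃ : Type} (op : S₁ → S₂ → S₃) (m₁ : MTBDD n S₁)
    (m₂ : MTBDD n S₂) :
    ∀ b : ℕ, OrderedFrom b m₁ → OrderedFrom b m₂ → OrderedFrom b (MTBDD.apply op m₁ m₂) := by
  induction m₁, m₂ using MTBDD.apply.induct with
  | case1 a b => intro b _ _; simp only [MTBDD.apply]; trivial
  | case2 a q lo hi ih1 ih2 =>
    intro b _ h2
    obtain ⟨hq, hlo, hhi⟩ := h2
    simp only [MTBDD.apply]
    exact ⟨hq, ih1 _ trivial hlo, ih2 _ trivial hhi⟩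
  | case3 p lo hi s ih1 ih2 =>
    intro b h1 _
    obtain ⟨hp, hlo, hhi⟩ := h1
    simp only [MTBDD.apply]
    exact ⟨hp, ih1 _ hlo trivial, ih2 _ hhi trivial⟩
  | case4 p lo hi q lo' hi' hpq ih1 ih2 =>
    intro b h1 h2
    obtain ⟨hp, hlo, hhi⟩ := h1
    obtain ⟨hq, hlo', hhi'⟩ := h2
    simp only [MTBDD.apply, if_pos hpq]
    have hq' : (p : ℕ) + 1 ≤ (q : ℕ) := by
      have : (p : ℕ) < (q : ℕ) := hpq
      omega
    exact ⟨hp, ih1 _ hlo ⟨hq', hlo', hhi'⟩, ih2 _ hhi ⟨hq', hlo', hhi'⟩⟩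
  | case5 p lo hi q lo' hi' hpq hqp ih1 ih2 =>
    intro b h1 h2
    obtain ⟨hp, hlo, hhi⟩ := h1
    obtain ⟨hq, hlo', hhi'⟩ := h2
    simp only [MTBDD.apply, if_neg hpq, if_pos hqp]
    have hp' : (q : ℕ) + 1 ≤ (p : ℕ) := by
      have : (q : ℕ) < (p : ℕ) := hqp
      omega
    exact ⟨hq, ih1 _ ⟨hp', hlo, hhi⟩ hlo', ih2 _ ⟨hp', hlo, hhi⟩ hhi'⟩
  | case6 p lo hi q lo' hi' hpq hqp ih1 ih2 =>
    intro b h1 h2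
    have hqp' : p = q := le_antisymm (not_lt.mp hqp) (not_lt.mp hpq)
    subst hqp'
    obtain ⟨hp, hlo, hhi⟩ := h1
    obtain ⟨hq, hlo', hhi'⟩ := h2
    simp only [MTBDD.apply, if_neg hpq, if_neg hqp]
    exact ⟨hp, ih1 _ hlo hlo', ih2 _ hhi hhi'⟩

/-- Evaluation of an MTBDD ordered from `b` only depends on the variables `≥ b`. -/
lemma eval_congr {S : Type} :
    ∀ (m : MTBDD n S) (b : ℕ) (w w' : Fin n → Bool), OrderedFrom b m →
      (∀ j : Fin n, b ≤ (j : ℕ) → w j = w' j) → m.eval w = m.eval w' := by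
  intro m
  induction m with
  | leaf s => intro b w w' _ _; rfl
  | node p lo hi ihlo ihhi =>
    intro b w w' hord hag
    obtain ⟨hp, hlo, hhi⟩ := hord
    have hwp : w p = w' p := hag p hp
    simp only [eval, hwp]
    by_cases h : w' p
    · simp only [h, if_pos]
      exact ihhi _ w w' hhi fun j hj => hag j (le_trans (by omega) hj)
    · simp only [h, if_neg Bool.false_ne_true]
      exact ihlo _ w w' hlo fun j hj => hag j (le_trans (by omega) hj)

/-- In an ordered MTBDD, every terminal in the list of terminals is attained
by some assignment. -/
lemma mem_leavesList_eval {S : Type} :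
    ∀ (m : MTBDD n S) (b : ℕ), OrderedFrom b m → ∀ s ∈ m.leavesList, ∃ w, m.eval w = s := by
  intro m
  induction m with
  | leaf t =>
    intro b _ s hs
    simp only [leavesList, List.mem_singleton] at hs
    subst hs
    exact ⟨fun _ => false, rfl⟩
  | node p lo hi ihlo ihhi =>
    intro b hord s hs
    obtain ⟨hp, hlo, hhi⟩ := hord
    rcases List.mem_append.mp hs with h | h
    · obtain ⟨w, hw⟩ := ihlo _ hlo s h
      refine ⟨Function.update w p false, ?_⟩
      have hne : ∀ j : Fin n, (p : ℕ) + 1 ≤ (j : ℕ) → w j = Function.update w p false j := by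
        intro j hj
        have : j ≠ p := by
          intro hc; subst hc; omega
        simp [Function.update_of_ne this]
      have heq := eval_congr lo ((p : ℕ) + 1) w (Function.update w p false) hlo hne
      have hev : (node p lo hi).eval (Function.update w p false)
          = lo.eval (Function.update w p false) := by
        simp [eval]
      rw [hev, ← heq, hw]
    · obtain ⟨w, hw⟩ := ihhi _ hhi s h
      refine ⟨Function.update w p true, ?_⟩
      have hne : ∀ j : Fin n, (p : ℕ) + 1 ≤ (j : ℕ) → w j = Function.update w p true j := by
        intro j hj
        have : j ≠ p := by
          intro hc; subst hc; omega
        simp [Function.update_of_ne this]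
      have heq := eval_congr hi ((p : ℕ) + 1) w (Function.update w p true) hhi hne
      have hev : (node p lo hi).eval (Function.update w p true)
          = hi.eval (Function.update w p true) := by
        simp [eval]
      rw [hev, ← heq, hw]

end MTBDD

/-! ### Facts about the translation `tr` -/

lemma tr_ordered (rep : LTLf (Fin n) → LTLf (Fin n)) :
    ∀ q : LTLf (Fin n), MTBDD.OrderedFrom 0 (tr rep q) := by
  intro q
  induction q with
  | tt => trivial
  | ff => trivial
  | atom p => exact ⟨Nat.zero_le _, trivial, trivial⟩
  | not a ih => exact MTBDD.orderedFrom_mapLeaf _ _ _ ih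
  | and a b iha ihb => exact MTBDD.orderedFrom_apply _ _ _ _ iha ihb
  | or a b iha ihb => exact MTBDD.orderedFrom_apply _ _ _ _ iha ihb
  | wnext a ih => trivial
  | snext a ih => trivial
  | untl a b iha ihb =>
    exact MTBDD.orderedFrom_apply _ _ _ _ ihb (MTBDD.orderedFrom_apply _ _ _ _ iha trivial)
  | release a b iha ihb =>
    exact MTBDD.orderedFrom_apply _ _ _ _ ihb (MTBDD.orderedFrom_apply _ _ _ _ iha trivial)
  | glob a ih => exact MTBDD.orderedFrom_apply _ _ _ _ ih trivial
  | fin a ih => exact MTBDD.orderedFrom_apply _ _ _ _ ih trivial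

/-- Every terminal formula of `tr rep q` is in the image of `rep`. -/
lemma eval_tr_rep (rep : LTLf (Fin n) → LTLf (Fin n)) :
    ∀ (q : LTLf (Fin n)) (w : Fin n → Bool), ∃ γ, ((tr rep q).eval w).1 = rep γ := by
  intro q w
  induction q with
  | tt => exact ⟨.tt, rfl⟩
  | ff => exact ⟨.ff, rfl⟩
  | atom p =>
    by_cases h : w p
    · exact ⟨.tt, by simp [tr, MTBDD.eval, h]⟩
    · exact ⟨.ff, by simp [tr, MTBDD.eval, h]⟩
  | not a ih =>
    refine ⟨.not ((tr rep a).eval w).1, ?_⟩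
    simp [tr, mnot, MTBDD.eval_mapLeaf]
  | and a b iha ihb =>
    refine ⟨.and ((tr rep a).eval w).1 ((tr rep b).eval w).1, ?_⟩
    simp [tr, mand, MTBDD.eval_apply]
  | or a b iha ihb =>
    refine ⟨.or ((tr rep a).eval w).1 ((tr rep b).eval w).1, ?_⟩
    simp [tr, mor, MTBDD.eval_apply]
  | wnext a ih => exact ⟨a, rfl⟩
  | snext a ih => exact ⟨a, rfl⟩
  | untl a b iha ihb =>
    refine ⟨.or ((tr rep b).eval w).1
      (rep (.and ((tr rep a).eval w).1 (rep (.untl a b)))), ?_⟩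
    simp [tr, mor, mand, MTBDD.eval_apply, MTBDD.eval]
  | release a b iha ihb =>
    refine ⟨.and ((tr rep b).eval w).1
      (rep (.or ((tr rep a).eval w).1 (rep (.release a b)))), ?_⟩
    simp [tr, mor, mand, MTBDD.eval_apply, MTBDD.eval]
  | glob a ih =>
    refine ⟨.and ((tr rep a).eval w).1 (rep (.glob a)), ?_⟩
    simp [tr, mand, MTBDD.eval_apply, MTBDD.eval]
  | fin a ih =>
    refine ⟨.or ((tr rep a).eval w).1 (rep (.fin a)), ?_⟩
    simp [tr, mor, MTBDD.eval_apply, MTBDD.eval]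

/-- Semantic characterization of the terminals of `tr rep q`: the Boolean
semantics of the terminal formula along branch `w` is the derivative `Vb w`. -/
lemma beval_eval_tr (rep : LTLf (Fin n) → LTLf (Fin n))
    (hrep₁ : ∀ α, LTLf.PropEquiv (rep α) α) :
    ∀ (q : LTLf (Fin n)) (w : Fin n → Bool) (u : LTLf (Fin n) → Prop),
      LTLf.BEval u ((tr rep q).eval w).1 ↔ Vb w u q := by
  intro q w u
  have hR : ∀ γ, LTLf.BEval u (rep γ) ↔ LTLf.BEval u γ := fun γ => hrep₁ γ u
  induction q with
  | tt => simp [tr, MTBDD.eval, Vb, hR, LTLf.BEval]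
  | ff => simp [tr, MTBDD.eval, Vb, hR, LTLf.BEval]
  | atom p =>
    by_cases h : w p <;>
      simp [tr, MTBDD.eval, Vb, hR, LTLf.BEval, h]
  | not a ih => simp [tr, mnot, MTBDD.eval_mapLeaf, Vb, hR, LTLf.BEval, ih]
  | and a b iha ihb => simp [tr, mand, MTBDD.eval_apply, Vb, hR, LTLf.BEval, iha, ihb]
  | or a b iha ihb => simp [tr, mor, MTBDD.eval_apply, Vb, hR, LTLf.BEval, iha, ihb]
  | wnext a ih =>
    simp only [tr, MTBDD.eval, Vb]
    exact hrep₁ a u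
  | snext a ih =>
    simp only [tr, MTBDD.eval, Vb]
    exact hrep₁ a u
  | untl a b iha ihb =>
    simp only [tr, mor, mand, MTBDD.eval_apply, MTBDD.eval, Vb]
    rw [hR]
    simp only [LTLf.BEval]
    refine or_congr ihb ?_
    rw [hR]
    simp only [LTLf.BEval]
    refine and_congr iha ?_
    rw [hR]
    simp [LTLf.BEval]
  | release a b iha ihb =>
    simp only [tr, mor, mand, MTBDD.eval_apply, MTBDD.eval, Vb]
    rw [hR]
    simp only [LTLf.BEval]
    refine and_congr ihb ?_
    rw [hR]
    simp only [LTLf.BEval]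
    refine or_congr iha ?_
    rw [hR]
    simp [LTLf.BEval]
  | glob a ih =>
    simp only [tr, mand, MTBDD.eval_apply, MTBDD.eval, Vb]
    rw [hR]
    simp only [LTLf.BEval]
    refine and_congr ih ?_
    rw [hR]
    simp [LTLf.BEval]
  | fin a ih =>
    simp only [tr, mor, MTBDD.eval_apply, MTBDD.eval, Vb]
    rw [hR]
    simp only [LTLf.BEval]
    refine or_congr ih ?_
    rw [hR]
    simp [LTLf.BEval]

/-- Invariant of reachability: every reachable state is a fixed point of `rep` and
its Boolean semantics only depends on the valuation on the subformulas of `φ`. -/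
lemma reach_inv (rep : LTLf (Fin n) → LTLf (Fin n))
    (hrep₁ : ∀ α, LTLf.PropEquiv (rep α) α)
    (hrep₂ : ∀ α β, LTLf.PropEquiv α β → rep α = rep β)
    (φ : LTLf (Fin n)) :
    ∀ q, Reach rep φ q → q = rep q ∧
      ∀ u u' : LTLf (Fin n) → Prop, (∀ τ ∈ φ.sf, (u τ ↔ u' τ)) →
        (LTLf.BEval u q ↔ LTLf.BEval u' q) := by
  intro q hq
  induction hq with
  | init =>
    constructor
    · exact (hrep₂ (rep φ) φ (hrep₁ φ)).symm
    · intro u u' hag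
      exact (hrep₁ φ u).trans ((LTLf.beval_congr φ hag).trans (hrep₁ φ u').symm)
  | @step q α b hql hmem ih =>
    obtain ⟨hfix, hdep⟩ := ih
    obtain ⟨w, hw⟩ := MTBDD.mem_leavesList_eval (tr rep q) 0 (tr_ordered rep q) (α, b) hmem
    have hα : α = ((tr rep q).eval w).1 := by rw [hw]
    constructor
    · obtain ⟨γ, hγ⟩ := eval_tr_rep rep q w
      rw [hα, hγ]
      exact (hrep₂ (rep γ) γ (hrep₁ γ)).symm
    · intro u u' hag
      have agr : ∀ τ ∈ φ.sf, (Vb w u τ ↔ Vb w u' τ) := by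
        intro τ hτ
        exact Vb_congr hag τ (LTLf.sf_closed hτ)
      calc LTLf.BEval u α ↔ Vb w u q := by rw [hα]; exact beval_eval_tr rep hrep₁ q w u
        _ ↔ LTLf.BEval (fun τ => Vb w u τ) q := (beval_Vb w u q).symm
        _ ↔ LTLf.BEval (fun τ => Vb w u' τ) q := hdep _ _ agr
        _ ↔ Vb w u' q := beval_Vb w u' q
        _ ↔ LTLf.BEval u' α := by rw [hα]; exact (beval_eval_tr rep hrep₁ q w u').symm

end AuxProofs

/-- The set of states of the MTDFA of `φ` is finite, of cardinality at most
`2^(2^|sf(φ)|)`. -/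
theorem reachable_states_finite {n : ℕ} (rep : LTLf (Fin n) → LTLf (Fin n))
    (hrep₁ : ∀ α, LTLf.PropEquiv (rep α) α)
    (hrep₂ : ∀ α β, LTLf.PropEquiv α β → rep α = rep β)
    (φ : LTLf (Fin n)) :
    {q | Reach rep φ q}.Finite ∧
      Nat.card {q | Reach rep φ q} ≤ 2 ^ (2 ^ (LTLf.sf φ).card) := by
  classical
  -- the injection into Boolean functions over valuations of subformulas of φ
  let F : {q | Reach rep φ q} → ((↥(φ.sf) → Prop) → Prop) :=
    fun q g => LTLf.BEval (fun τ => ∃ h : τ ∈ φ.sf, g ⟨τ, h⟩) q.1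
  have hinj : Function.Injective F := by
    rintro ⟨q, hq⟩ ⟨q', hq'⟩ hFq
    obtain ⟨hfix, hdep⟩ := reach_inv rep hrep₁ hrep₂ φ q hq
    obtain ⟨hfix', hdep'⟩ := reach_inv rep hrep₁ hrep₂ φ q' hq'
    have hequiv : LTLf.PropEquiv q q' := by
      intro u
      have hag : ∀ τ ∈ φ.sf, (u τ ↔ (∃ h : τ ∈ φ.sf, u τ)) := by
        intro τ hτ
        exact ⟨fun h => ⟨hτ, h⟩, fun ⟨_, h⟩ => h⟩
      have e1 : LTLf.BEval u q ↔ LTLf.BEval (fun τ => ∃ h : τ ∈ φ.sf, u τ) q :=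
        hdep _ _ hag
      have e2 : LTLf.BEval u q' ↔ LTLf.BEval (fun τ => ∃ h : τ ∈ φ.sf, u τ) q' :=
        hdep' _ _ hag
      have e3 : F ⟨q, hq⟩ (fun x => u x.1) = F ⟨q', hq'⟩ (fun x => u x.1) := by
        rw [hFq]
      have e3' : LTLf.BEval (fun τ => ∃ h : τ ∈ φ.sf, u τ) q
          ↔ LTLf.BEval (fun τ => ∃ h : τ ∈ φ.sf, u τ) q' := by
        exact iff_of_eq e3
      exact e1.trans (e3'.trans e2.symm)
    have : rep q = rep q' := hrep₂ q q' hequiv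
    exact Subtype.ext (hfix.trans (this.trans hfix'.symm))
  have hfin : Finite ↥{q | Reach rep φ q} := Finite.of_injective F hinj
  constructor
  · exact Set.finite_coe_iff.mp hfin
  · have hle : Nat.card ↥{q | Reach rep φ q} ≤ Nat.card ((↥(φ.sf) → Prop) → Prop) :=
      Nat.card_le_card_of_injective F hinj
    have hcard : Nat.card ((↥(φ.sf) → Prop) → Prop) = 2 ^ (2 ^ (LTLf.sf φ).card) := by
      rw [Nat.card_fun, Nat.card_fun]
      simp [Nat.card_eq_fintype_card]
    rw [hcard] at hle
    exact hle
end

section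
/- Correctness of the LTLf-to-MTDFA translation: for any LTLf formula φ over P, the MTDFA A_φ with states Q (closed under leaves of tr), initial state [φ]≡ and transition function Δ = tr satisfies L(A_φ) = L(φ): a finite nonempty word σ is accepted by A_φ (i.e., the Boolean component of the terminal reached after reading σ is ⊤) if and only if σ,0 ⊨ φ. -/
/-- Run of the MTDFA `A_φ` on a word: starting from `([φ]≡, ⊥)`, repeatedly
evaluate the MTBDD of the current state on the next assignment. -/
def runMTDFA {n : ℕ} (rep : LTLf (Fin n) → LTLf (Fin n)) (φ : LTLf (Fin n))
    (σ : List (Fin n → Bool)) : LTLf (Fin n) × Bool :=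
  σ.foldl (fun qb w => (tr rep qb.1).eval w) (rep φ, false)

/-! ### Auxiliary lemmas -/

theorem MTBDD.eval_mapLeaf_s15 {n : ℕ} {S T : Type} (f : S → T) (m : MTBDD n S)
    (w : Fin n → Bool) : (m.mapLeaf f).eval w = f (m.eval w) := by
  induction m with
  | leaf s => rfl
  | node p lo hi ih1 ih2 =>
    by_cases h : w p <;> simp [MTBDD.mapLeaf, MTBDD.eval, h, ih1, ih2]

theorem MTBDD.eval_apply_s15 {n : ℕ} {S₁ S₂ S₃ : Type} (op : S₁ → S₂ → S₃)
    (m₁ : MTBDD n S₁) (m₂ : MTBDD n S₂) (w : Fin n → Bool) :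
    (MTBDD.apply op m₁ m₂).eval w = op (m₁.eval w) (m₂.eval w) := by
  induction m₁ generalizing m₂ with
  | leaf a =>
    induction m₂ with
    | leaf b => rw [MTBDD.apply]; rfl
    | node q lo hi ih1 ih2 =>
      by_cases h : w q <;> simp [MTBDD.apply, MTBDD.eval, h, ih1, ih2]
  | node p lo hi ihlo ihhi =>
    induction m₂ with
    | leaf b =>
      by_cases h : w p <;> simp [MTBDD.apply, MTBDD.eval, h, ihlo, ihhi]
    | node q lo' hi' ih1 ih2 =>
      rcases lt_trichotomy p q with h | h | h
      · rw [MTBDD.apply]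
        simp only [if_pos h]
        by_cases hw : w p <;> simp [MTBDD.eval, hw, ihlo, ihhi]
      · subst h
        rw [MTBDD.apply]
        simp only [lt_irrefl, if_false]
        by_cases hw : w p <;> simp [MTBDD.eval, hw, ihlo, ihhi]
      · rw [MTBDD.apply]
        simp only [if_neg (not_lt_of_gt h), if_pos h]
        by_cases hw : w q <;> simp [MTBDD.eval, hw, ih1, ih2]

theorem beval_sat {P : Type} (σ : List (P → Bool)) (i : ℕ) (α : LTLf P) :
    LTLf.BEval (fun δ => LTLf.Sat σ δ i) α ↔ LTLf.Sat σ α i := by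
  induction α with
  | tt => simp [LTLf.BEval, LTLf.Sat]
  | ff => simp [LTLf.BEval, LTLf.Sat]
  | atom p => exact Iff.rfl
  | not φ ih => simp only [LTLf.BEval, LTLf.Sat, ih]
  | and φ ψ ih1 ih2 => simp only [LTLf.BEval, LTLf.Sat, ih1, ih2]
  | or φ ψ ih1 ih2 => simp only [LTLf.BEval, LTLf.Sat, ih1, ih2]
  | wnext φ _ => exact Iff.rfl
  | snext φ _ => exact Iff.rfl
  | untl φ ψ _ _ => exact Iff.rfl
  | release φ ψ _ _ => exact Iff.rfl
  | glob φ _ => exact Iff.rfl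
  | fin φ _ => exact Iff.rfl

theorem sat_of_propEquiv {P : Type} {α β : LTLf P} (h : LTLf.PropEquiv α β)
    (σ : List (P → Bool)) (i : ℕ) : LTLf.Sat σ α i ↔ LTLf.Sat σ β i :=
  (beval_sat σ i α).symm.trans ((h _).trans (beval_sat σ i β))

theorem sat_shift {P : Type} (w : P → Bool) (τ : List (P → Bool)) (α : LTLf P) :
    ∀ i, LTLf.Sat (w :: τ) α (i + 1) ↔ LTLf.Sat τ α i := by
  induction α with
  | tt => intro i; exact Iff.rfl
  | ff => intro i; exact Iff.rfl
  | atom p => intro i; simp [LTLf.Sat]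
  | not φ ih => intro i; simp only [LTLf.Sat, ih]
  | and φ ψ ih1 ih2 => intro i; simp only [LTLf.Sat, ih1, ih2]
  | or φ ψ ih1 ih2 => intro i; simp only [LTLf.Sat, ih1, ih2]
  | wnext φ ih =>
    intro i
    simp only [LTLf.Sat, List.length_cons, ih (i + 1)]
    constructor
    · rintro (h | h)
      · exact Or.inl (by omega)
      · exact Or.inr h
    · rintro (h | h)
      · exact Or.inl (by omega)
      · exact Or.inr h
  | snext φ ih =>
    intro i
    simp only [LTLf.Sat, List.length_cons, ih (i + 1)]
    constructor
    · rintro ⟨h1, h2⟩; exact ⟨by omega, h2⟩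
    · rintro ⟨h1, h2⟩; exact ⟨by omega, h2⟩
  | untl φ ψ ih1 ih2 =>
    intro i
    simp only [LTLf.Sat, List.length_cons]
    constructor
    · rintro ⟨j, h1, h2, h3, h4⟩
      obtain ⟨j, rfl⟩ : ∃ j', j = j' + 1 := ⟨j - 1, by omega⟩
      exact ⟨j, by omega, by omega, (ih2 j).1 h3,
        fun k hk1 hk2 => (ih1 k).1 (h4 (k + 1) (by omega) (by omega))⟩
    · rintro ⟨j, h1, h2, h3, h4⟩
      refine ⟨j + 1, by omega, by omega, (ih2 j).2 h3, fun k hk1 hk2 => ?_⟩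
      obtain ⟨k, rfl⟩ : ∃ k', k = k' + 1 := ⟨k - 1, by omega⟩
      exact (ih1 k).2 (h4 k (by omega) (by omega))
  | release φ ψ ih1 ih2 =>
    intro i
    simp only [LTLf.Sat, List.length_cons]
    constructor
    · intro h j hj1 hj2
      rcases h (j + 1) (by omega) (by omega) with h' | ⟨k, hk1, hk2, hk3⟩
      · exact Or.inl ((ih2 j).1 h')
      · obtain ⟨k, rfl⟩ : ∃ k', k = k' + 1 := ⟨k - 1, by omega⟩
        exact Or.inr ⟨k, by omega, by omega, (ih1 k).1 hk3⟩
    · intro h j hj1 hj2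
      obtain ⟨j, rfl⟩ : ∃ j', j = j' + 1 := ⟨j - 1, by omega⟩
      rcases h j (by omega) (by omega) with h' | ⟨k, hk1, hk2, hk3⟩
      · exact Or.inl ((ih2 j).2 h')
      · exact Or.inr ⟨k + 1, by omega, by omega, (ih1 k).2 hk3⟩
  | glob φ ih =>
    intro i
    simp only [LTLf.Sat, List.length_cons]
    constructor
    · intro h j hj1 hj2
      exact (ih j).1 (h (j + 1) (by omega) (by omega))
    · intro h j hj1 hj2
      obtain ⟨j, rfl⟩ : ∃ j', j = j' + 1 := ⟨j - 1, by omega⟩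
      exact (ih j).2 (h j (by omega) (by omega))
  | fin φ ih =>
    intro i
    simp only [LTLf.Sat, List.length_cons]
    constructor
    · rintro ⟨j, h1, h2, h3⟩
      obtain ⟨j, rfl⟩ : ∃ j', j = j' + 1 := ⟨j - 1, by omega⟩
      exact ⟨j, by omega, by omega, (ih j).1 h3⟩
    · rintro ⟨j, h1, h2, h3⟩
      exact ⟨j + 1, by omega, by omega, (ih j).2 h3⟩

theorem sat_untl_cons {P : Type} (w : P → Bool) (τ : List (P → Bool))
    (α β : LTLf P) :
    LTLf.Sat (w :: τ) (.untl α β) 0 ↔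
      LTLf.Sat (w :: τ) β 0 ∨ (LTLf.Sat (w :: τ) α 0 ∧ LTLf.Sat τ (.untl α β) 0) := by
  rw [← sat_shift w τ (.untl α β) 0]
  simp only [LTLf.Sat, List.length_cons]
  constructor
  · rintro ⟨j, h1, h2, h3, h4⟩
    rcases Nat.eq_zero_or_pos j with rfl | hj
    · exact Or.inl h3
    · exact Or.inr ⟨h4 0 (by omega) hj,
        ⟨j, by omega, h2, h3, fun k hk1 hk2 => h4 k (by omega) hk2⟩⟩
  · rintro (h | ⟨h1, j, h2, h3, h4, h5⟩)
    · exact ⟨0, le_refl 0, by omega, h, fun k hk1 hk2 => absurd hk2 (by omega)⟩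
    · refine ⟨j, by omega, h3, h4, fun k hk1 hk2 => ?_⟩
      rcases Nat.eq_zero_or_pos k with rfl | hk
      · exact h1
      · exact h5 k (by omega) hk2

theorem sat_release_cons {P : Type} (w : P → Bool) (τ : List (P → Bool))
    (α β : LTLf P) :
    LTLf.Sat (w :: τ) (.release α β) 0 ↔
      LTLf.Sat (w :: τ) β 0 ∧ (LTLf.Sat (w :: τ) α 0 ∨ LTLf.Sat τ (.release α β) 0) := by
  rw [← sat_shift w τ (.release α β) 0]
  simp only [LTLf.Sat, List.length_cons]
  constructor
  · intro h
    have hβ : LTLf.Sat (w :: τ) β 0 := by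
      rcases h 0 (le_refl 0) (by omega) with h' | ⟨k, hk1, hk2, _⟩
      · exact h'
      · omega
    refine ⟨hβ, ?_⟩
    by_cases hα : LTLf.Sat (w :: τ) α 0
    · exact Or.inl hα
    · refine Or.inr (fun j hj1 hj2 => ?_)
      rcases h j (by omega) hj2 with h' | ⟨k, hk1, hk2, hk3⟩
      · exact Or.inl h'
      · rcases Nat.eq_zero_or_pos k with rfl | hk
        · exact absurd hk3 hα
        · exact Or.inr ⟨k, by omega, hk2, hk3⟩
  · rintro ⟨hβ, h⟩ j hj1 hj2
    rcases Nat.eq_zero_or_pos j with rfl | hj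
    · exact Or.inl hβ
    · rcases h with hα | hrel
      · exact Or.inr ⟨0, by omega, hj, hα⟩
      · rcases hrel j (by omega) hj2 with h' | ⟨k, hk1, hk2, hk3⟩
        · exact Or.inl h'
        · exact Or.inr ⟨k, by omega, hk2, hk3⟩

theorem sat_glob_cons {P : Type} (w : P → Bool) (τ : List (P → Bool))
    (α : LTLf P) :
    LTLf.Sat (w :: τ) (.glob α) 0 ↔
      LTLf.Sat (w :: τ) α 0 ∧ LTLf.Sat τ (.glob α) 0 := by
  rw [← sat_shift w τ (.glob α) 0]
  simp only [LTLf.Sat, List.length_cons]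
  constructor
  · intro h
    exact ⟨h 0 (le_refl 0) (by omega), fun j hj1 hj2 => h j (by omega) hj2⟩
  · rintro ⟨h0, h⟩ j hj1 hj2
    rcases Nat.eq_zero_or_pos j with rfl | hj
    · exact h0
    · exact h j (by omega) hj2

theorem sat_fin_cons {P : Type} (w : P → Bool) (τ : List (P → Bool))
    (α : LTLf P) :
    LTLf.Sat (w :: τ) (.fin α) 0 ↔
      LTLf.Sat (w :: τ) α 0 ∨ LTLf.Sat τ (.fin α) 0 := by
  rw [← sat_shift w τ (.fin α) 0]
  simp only [LTLf.Sat, List.length_cons]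
  constructor
  · rintro ⟨j, h1, h2, h3⟩
    rcases Nat.eq_zero_or_pos j with rfl | hj
    · exact Or.inl h3
    · exact Or.inr ⟨j, by omega, h2, h3⟩
  · rintro (h | ⟨j, h1, h2, h3⟩)
    · exact ⟨0, le_refl 0, by omega, h⟩
    · exact ⟨j, by omega, h2, h3⟩

/-- The key step lemma for the translation. -/
theorem tr_step {n : ℕ} (rep : LTLf (Fin n) → LTLf (Fin n))
    (hrep₁ : ∀ α, LTLf.PropEquiv (rep α) α)
    (α : LTLf (Fin n)) (w : Fin n → Bool) :
    (((tr rep α).eval w).2 = true ↔ LTLf.Sat [w] α 0) ∧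
    (∀ τ : List (Fin n → Bool), τ ≠ [] →
      (LTLf.Sat τ ((tr rep α).eval w).1 0 ↔ LTLf.Sat (w :: τ) α 0)) := by
  have hr : ∀ (γ : LTLf (Fin n)) (σ : List (Fin n → Bool)) (i : ℕ),
      LTLf.Sat σ (rep γ) i ↔ LTLf.Sat σ γ i :=
    fun γ σ i => sat_of_propEquiv (hrep₁ γ) σ i
  induction α with
  | tt =>
    refine ⟨by simp [tr, MTBDD.eval, LTLf.Sat], fun τ hτ => ?_⟩
    simp only [tr, MTBDD.eval]
    rw [hr]
    simp [LTLf.Sat]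
  | ff =>
    refine ⟨by simp [tr, MTBDD.eval, LTLf.Sat], fun τ hτ => ?_⟩
    simp only [tr, MTBDD.eval]
    rw [hr]
    simp [LTLf.Sat]
  | atom p =>
    by_cases h : w p
    · refine ⟨by simp [tr, MTBDD.eval, LTLf.Sat, h], fun τ hτ => ?_⟩
      simp only [tr, MTBDD.eval, if_pos h]
      rw [hr]
      simp [LTLf.Sat, h]
    · refine ⟨by simp [tr, MTBDD.eval, LTLf.Sat, h], fun τ hτ => ?_⟩
      simp only [tr, MTBDD.eval, if_neg h]
      rw [hr]
      simp [LTLf.Sat, h]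
  | not φ ih =>
    have he : (tr rep (.not φ)).eval w =
        (rep (.not ((tr rep φ).eval w).1), !((tr rep φ).eval w).2) := by
      rw [show tr rep (.not φ) = mnot rep (tr rep φ) from rfl, mnot,
        MTBDD.eval_mapLeaf_s15]
    rw [he]
    constructor
    · simp only [LTLf.Sat, ← ih.1, Bool.not_eq_true', Bool.not_eq_true]
    · intro τ hτ
      rw [hr]
      simp only [LTLf.Sat, ih.2 τ hτ]
  | and φ ψ ih1 ih2 =>
    have he : (tr rep (.and φ ψ)).eval w =
        (rep (.and ((tr rep φ).eval w).1 ((tr rep ψ).eval w).1),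
          ((tr rep φ).eval w).2 && ((tr rep ψ).eval w).2) := by
      rw [show tr rep (.and φ ψ) = mand rep (tr rep φ) (tr rep ψ) from rfl, mand,
        MTBDD.eval_apply_s15]
    rw [he]
    constructor
    · simp only [LTLf.Sat, ← ih1.1, ← ih2.1, Bool.and_eq_true]
    · intro τ hτ
      rw [hr]
      simp only [LTLf.Sat, ih1.2 τ hτ, ih2.2 τ hτ]
  | or φ ψ ih1 ih2 =>
    have he : (tr rep (.or φ ψ)).eval w =
        (rep (.or ((tr rep φ).eval w).1 ((tr rep ψ).eval w).1),
          ((tr rep φ).eval w).2 || ((tr rep ψ).eval w).2) := by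
      rw [show tr rep (.or φ ψ) = mor rep (tr rep φ) (tr rep ψ) from rfl, mor,
        MTBDD.eval_apply_s15]
    rw [he]
    constructor
    · simp only [LTLf.Sat, ← ih1.1, ← ih2.1, Bool.or_eq_true]
    · intro τ hτ
      rw [hr]
      simp only [LTLf.Sat, ih1.2 τ hτ, ih2.2 τ hτ]
  | wnext φ _ =>
    refine ⟨by simp [tr, MTBDD.eval, LTLf.Sat], fun τ hτ => ?_⟩
    simp only [tr, MTBDD.eval]
    rw [hr]
    have hlen : τ.length ≠ 0 := fun h => hτ (List.length_eq_zero_iff.mp h)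
    simp only [LTLf.Sat, List.length_cons, sat_shift w τ φ 0]
    constructor
    · exact fun h => Or.inr h
    · rintro (h | h)
      · omega
      · exact h
  | snext φ _ =>
    refine ⟨by simp [tr, MTBDD.eval, LTLf.Sat], fun τ hτ => ?_⟩
    simp only [tr, MTBDD.eval]
    rw [hr]
    have hlen : τ.length ≠ 0 := fun h => hτ (List.length_eq_zero_iff.mp h)
    simp only [LTLf.Sat, List.length_cons, sat_shift w τ φ 0]
    constructor
    · exact fun h => ⟨by omega, h⟩
    · rintro ⟨_, h⟩
      exact h
  | untl φ ψ ih1 ih2 =>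
    have he : (tr rep (.untl φ ψ)).eval w =
        (rep (.or ((tr rep ψ).eval w).1
            (rep (.and ((tr rep φ).eval w).1 (rep (.untl φ ψ))))),
          ((tr rep ψ).eval w).2 || (((tr rep φ).eval w).2 && false)) := by
      rw [show tr rep (.untl φ ψ) =
        mor rep (tr rep ψ) (mand rep (tr rep φ) (.leaf (rep (.untl φ ψ), false)))
          from rfl, mor, mand, MTBDD.eval_apply_s15, MTBDD.eval_apply_s15]
      rfl
    rw [he]
    constructor
    · rw [sat_untl_cons w [] φ ψ]
      simp only [LTLf.Sat, List.length_nil, Bool.and_false, Bool.or_false, ih2.1]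
      constructor
      · exact fun h => Or.inl h
      · rintro (h | ⟨_, j, _, h2, _⟩)
        · exact h
        · omega
    · intro τ hτ
      rw [sat_untl_cons w τ φ ψ]
      simp only [hr, LTLf.Sat, ih1.2 τ hτ, ih2.2 τ hτ]
  | release φ ψ ih1 ih2 =>
    have he : (tr rep (.release φ ψ)).eval w =
        (rep (.and ((tr rep ψ).eval w).1
            (rep (.or ((tr rep φ).eval w).1 (rep (.release φ ψ))))),
          ((tr rep ψ).eval w).2 && (((tr rep φ).eval w).2 || true)) := by
      rw [show tr rep (.release φ ψ) =
        mand rep (tr rep ψ) (mor rep (tr rep φ) (.leaf (rep (.release φ ψ), true)))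
          from rfl, mand, mor, MTBDD.eval_apply_s15, MTBDD.eval_apply_s15]
      rfl
    rw [he]
    constructor
    · rw [sat_release_cons w [] φ ψ]
      simp only [LTLf.Sat, List.length_nil, Bool.or_true, Bool.and_true, ih2.1]
      constructor
      · exact fun h => ⟨h, Or.inr (fun j hj1 hj2 => absurd hj2 (by omega))⟩
      · rintro ⟨h, _⟩
        exact h
    · intro τ hτ
      rw [sat_release_cons w τ φ ψ]
      simp only [hr, LTLf.Sat, ih1.2 τ hτ, ih2.2 τ hτ]
  | glob φ ih =>
    have he : (tr rep (.glob φ)).eval w =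
        (rep (.and ((tr rep φ).eval w).1 (rep (.glob φ))),
          ((tr rep φ).eval w).2 && true) := by
      rw [show tr rep (.glob φ) =
        mand rep (tr rep φ) (.leaf (rep (.glob φ), true)) from rfl, mand,
        MTBDD.eval_apply_s15]
      rfl
    rw [he]
    constructor
    · rw [sat_glob_cons w [] φ]
      simp only [LTLf.Sat, List.length_nil, Bool.and_true, ih.1]
      constructor
      · exact fun h => ⟨h, fun j hj1 hj2 => absurd hj2 (by omega)⟩
      · rintro ⟨h, _⟩
        exact h
    · intro τ hτ
      rw [sat_glob_cons w τ φ]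
      simp only [hr, LTLf.Sat, ih.2 τ hτ]
  | fin φ ih =>
    have he : (tr rep (.fin φ)).eval w =
        (rep (.or ((tr rep φ).eval w).1 (rep (.fin φ))),
          ((tr rep φ).eval w).2 || false) := by
      rw [show tr rep (.fin φ) =
        mor rep (tr rep φ) (.leaf (rep (.fin φ), false)) from rfl, mor,
        MTBDD.eval_apply_s15]
      rfl
    rw [he]
    constructor
    · rw [sat_fin_cons w [] φ]
      simp only [LTLf.Sat, List.length_nil, Bool.or_false, ih.1]
      constructor
      · exact fun h => Or.inl h
      · rintro (h | ⟨j, _, h2, _⟩)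
        · exact h
        · omega
    · intro τ hτ
      rw [sat_fin_cons w τ φ]
      simp only [hr, LTLf.Sat, ih.2 τ hτ]

theorem fold_correct {n : ℕ} (rep : LTLf (Fin n) → LTLf (Fin n))
    (hrep₁ : ∀ α, LTLf.PropEquiv (rep α) α) :
    ∀ (σ : List (Fin n → Bool)), σ ≠ [] → ∀ (α : LTLf (Fin n)) (b : Bool),
      (σ.foldl (fun qb w => (tr rep qb.1).eval w) (α, b)).2 = true ↔
        LTLf.Sat σ α 0 := by
  intro σ
  induction σ with
  | nil => intro h; exact absurd rfl h
  | cons w τ ih =>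
    intro _ α b
    have hstep : (w :: τ).foldl (fun qb w => (tr rep qb.1).eval w) (α, b) =
        τ.foldl (fun qb w => (tr rep qb.1).eval w) ((tr rep α).eval w) := rfl
    rw [hstep]
    rcases eq_or_ne τ [] with rfl | hτ
    · exact (tr_step rep hrep₁ α w).1
    · have := ih hτ ((tr rep α).eval w).1 ((tr rep α).eval w).2
      rw [Prod.mk.eta] at this
      rw [this]
      exact (tr_step rep hrep₁ α w).2 τ hτ

/-- Correctness of the LTLf-to-MTDFA translation: a finite nonempty word is
accepted by `A_φ` iff it satisfies `φ`. -/
theorem mtdfa_translation_correct {n : ℕ} (rep : LTLf (Fin n) → LTLf (Fin n))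
    (hrep₁ : ∀ α, LTLf.PropEquiv (rep α) α)
    (hrep₂ : ∀ α β, LTLf.PropEquiv α β → rep α = rep β)
    (φ : LTLf (Fin n)) (σ : List (Fin n → Bool)) (hσ : σ ≠ []) :
    (runMTDFA rep φ σ).2 = true ↔ LTLf.Sat σ φ 0 := by
  rw [runMTDFA, fold_correct rep hrep₁ σ hσ (rep φ) false]
  exact sat_of_propEquiv (hrep₁ φ) σ 0
end
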